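/- If E is a directed graph, R is an associative unital ring, G is a group, and L_R(E) is equipped with any standard G-gradation S = ⊕_{g∈G} S_g, then L_R(E) is symmetrically G-graded (S_g S_{g⁻¹} S_g = S_g for all g ∈ G), and for every g ∈ G and every nonzero x ∈ S_g one has (S_g S_{g⁻¹}) x ≠ {0} and x (S_{g⁻¹} S_g) ≠ {0} (i.e. L_R(E) is strongly right non-degenerately G-graded and strongly left non-degenerately G-graded). -/

import Mathlib

namespace LPA

/-- Generators of the Leavitt path algebra: a vertex `v`, a (real) edge `f`,
or a ghost edge `f*`. -/
inductive Gen (V Ed : Type*) : Type _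
  | vertex : V → Gen V Ed
  | edge : Ed → Gen V Ed
  | ghost : Ed → Gen V Ed

/-- The free `R`-ring on the generators, with `R` commuting with the generators. -/
abbrev FreeLPA (R V Ed : Type*) [Ring R] : Type _ := MonoidAlgebra R (FreeMonoid (Gen V Ed))

noncomputable def genF (R : Type*) [Ring R] {V Ed : Type*} (x : Gen V Ed) : FreeLPA R V Ed :=
  MonoidAlgebra.of R (FreeMonoid (Gen V Ed)) (FreeMonoid.of x)

/-- The defining relations of the Leavitt path algebra of the graph with vertices `V`,
edges `Ed`, source map `sf` and range map `rf`. -/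
inductive Rel (R : Type*) [Ring R] {V Ed : Type*} (sf rf : Ed → V) :
    FreeLPA R V Ed → FreeLPA R V Ed → Prop
  | vertex_eq (v : V) :
      Rel R sf rf (genF R (Gen.vertex v) * genF R (Gen.vertex v)) (genF R (Gen.vertex v))
  | vertex_ne {v w : V} (h : v ≠ w) :
      Rel R sf rf (genF R (Gen.vertex v) * genF R (Gen.vertex w)) 0
  | src_edge (f : Ed) :
      Rel R sf rf (genF R (Gen.vertex (sf f)) * genF R (Gen.edge f)) (genF R (Gen.edge f))
  | edge_rng (f : Ed) :
      Rel R sf rf (genF R (Gen.edge f) * genF R (Gen.vertex (rf f))) (genF R (Gen.edge f))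
  | rng_ghost (f : Ed) :
      Rel R sf rf (genF R (Gen.vertex (rf f)) * genF R (Gen.ghost f)) (genF R (Gen.ghost f))
  | ghost_src (f : Ed) :
      Rel R sf rf (genF R (Gen.ghost f) * genF R (Gen.vertex (sf f))) (genF R (Gen.ghost f))
  | ghost_edge_eq (f : Ed) :
      Rel R sf rf (genF R (Gen.ghost f) * genF R (Gen.edge f)) (genF R (Gen.vertex (rf f)))
  | ghost_edge_ne {f f' : Ed} (h : f ≠ f') :
      Rel R sf rf (genF R (Gen.ghost f) * genF R (Gen.edge f')) 0
  | cuntz_krieger (v : V) (h1 : {f : Ed | sf f = v}.Nonempty) (h2 : {f : Ed | sf f = v}.Finite) :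
      Rel R sf rf (∑ f ∈ h2.toFinset, genF R (Gen.edge f) * genF R (Gen.ghost f))
        (genF R (Gen.vertex v))

/-- The Leavitt path algebra `L_R(E)` (as the ambient unital quotient ring in which the
span of the monomials `α β*` is the Leavitt path algebra). -/
abbrev LeavittPathAlgebra (R : Type*) [Ring R] {V Ed : Type*} (sf rf : Ed → V) : Type _ :=
  RingQuot (Rel R sf rf)

noncomputable def gen (R : Type*) [Ring R] {V Ed : Type*} (sf rf : Ed → V) (x : Gen V Ed) :
    LeavittPathAlgebra R sf rf :=
  RingQuot.mkRingHom (Rel R sf rf) (genF R x)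

noncomputable def ofR (R : Type*) [Ring R] {V Ed : Type*} (sf rf : Ed → V) (r : R) :
    LeavittPathAlgebra R sf rf :=
  RingQuot.mkRingHom (Rel R sf rf) (MonoidAlgebra.single (1 : FreeMonoid (Gen V Ed)) r)

/-- Paths in the directed graph. `GPath sf rf u w` are the paths with source `u`
and range `w`; a vertex is a path of length `0`. -/
inductive GPath {V Ed : Type*} (sf rf : Ed → V) : V → V → Type _
  | nil (v : V) : GPath sf rf v v
  | cons (f : Ed) {w : V} (p : GPath sf rf (rf f) w) : GPath sf rf (sf f) w

namespace GPath

def length {V Ed : Type*} {sf rf : Ed → V} : {u w : V} → GPath sf rf u w → ℕ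
  | _, _, nil _ => 0
  | _, _, cons _ p => length p + 1

def edgeList {V Ed : Type*} {sf rf : Ed → V} : {u w : V} → GPath sf rf u w → List Ed
  | _, _, nil _ => []
  | _, _, cons f p => f :: edgeList p

/-- The degree of a path with respect to a degree map `dg : Ed → G`. -/
def degree {V Ed : Type*} {sf rf : Ed → V} {G : Type*} [Group G] (dg : Ed → G) :
    {u w : V} → GPath sf rf u w → G
  | _, _, nil _ => 1
  | _, _, cons f p => dg f * degree dg p

end GPath

/-- The element `α` of `L_R(E)` associated to a path `α` (a vertex if `α` has length 0). -/
noncomputable def realElem (R : Type*) [Ring R] {V Ed : Type*} (sf rf : Ed → V) :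
    {u w : V} → GPath sf rf u w → LeavittPathAlgebra R sf rf
  | _, _, .nil v => gen R sf rf (Gen.vertex v)
  | _, _, .cons f p => gen R sf rf (Gen.edge f) * realElem R sf rf p

/-- The element `α* = α_n* ⋯ α_1*` of `L_R(E)` associated to a path `α`. -/
noncomputable def ghostElem (R : Type*) [Ring R] {V Ed : Type*} (sf rf : Ed → V) :
    {u w : V} → GPath sf rf u w → LeavittPathAlgebra R sf rf
  | _, _, .nil v => gen R sf rf (Gen.vertex v)
  | _, _, .cons f p => ghostElem R sf rf p * gen R sf rf (Gen.ghost f)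

/-- The product `AB` of two additive subgroups of a ring: the additive subgroup
generated by all products `ab`, `a ∈ A`, `b ∈ B`. -/
def sgMul {A : Type*} [NonUnitalRing A] (B C : AddSubgroup A) : AddSubgroup A :=
  AddSubgroup.closure {x | ∃ b ∈ B, ∃ c ∈ C, x = b * c}

/-- The homogeneous component `S_g` of the standard `G`-gradation of `L_R(E)` attached
to the degree map `dg : Ed → G`: the `R`-span of the monomials `α β*` with
`r(α) = r(β)` and `deg α * (deg β)⁻¹ = g`. -/
noncomputable def component (R : Type*) [Ring R] {V Ed : Type*} (sf rf : Ed → V) {G : Type*} [Group G]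
    (dg : Ed → G) (g : G) : AddSubgroup (LeavittPathAlgebra R sf rf) :=
  AddSubgroup.closure
    {x | ∃ (r : R) (u u' w : V) (α : GPath sf rf u w) (β : GPath sf rf u' w),
      α.degree dg * (β.degree dg)⁻¹ = g ∧
      x = ofR R sf rf r * (realElem R sf rf α * ghostElem R sf rf β)}

/-- The homogeneous component `S_n` of the canonical `ℤ`-gradation of `L_R(E)`:
the `R`-span of the monomials `α β*` with `r(α) = r(β)` and `l(α) - l(β) = n`. -/
noncomputable def componentZ (R : Type*) [Ring R] {V Ed : Type*} (sf rf : Ed → V) (n : ℤ) :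
    AddSubgroup (LeavittPathAlgebra R sf rf) :=
  AddSubgroup.closure
    {x | ∃ (r : R) (u u' w : V) (α : GPath sf rf u w) (β : GPath sf rf u' w),
      (α.length : ℤ) - (β.length : ℤ) = n ∧
      x = ofR R sf rf r * (realElem R sf rf α * ghostElem R sf rf β)}

end LPA

namespace LPA

/-- Composition (concatenation) of paths. -/
def GPath.comp {V Ed : Type*} {sf rf : Ed → V} :
    {u v w : V} → GPath sf rf u v → GPath sf rf v w → GPath sf rf u w
  | _, _, _, .nil _, q => q
  | _, _, _, .cons f p, q => .cons f (p.comp q)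

section Aux

variable (R : Type*) [Ring R] {V Ed : Type*} (sf rf : Ed → V)

/-! ### the defining relations, in the quotient -/

lemma g_vv (v : V) :
    gen R sf rf (Gen.vertex v) * gen R sf rf (Gen.vertex v) = gen R sf rf (Gen.vertex v) := by
  simp only [gen, ← map_mul]
  exact RingQuot.mkRingHom_rel (Rel.vertex_eq v)

lemma g_vv_ne {v w : V} (h : v ≠ w) :
    gen R sf rf (Gen.vertex v) * gen R sf rf (Gen.vertex w) = 0 := by
  simp only [gen, ← map_mul]
  rw [RingQuot.mkRingHom_rel (Rel.vertex_ne h), map_zero]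

lemma g_se (f : Ed) :
    gen R sf rf (Gen.vertex (sf f)) * gen R sf rf (Gen.edge f) = gen R sf rf (Gen.edge f) := by
  simp only [gen, ← map_mul]
  exact RingQuot.mkRingHom_rel (Rel.src_edge f)

lemma g_er (f : Ed) :
    gen R sf rf (Gen.edge f) * gen R sf rf (Gen.vertex (rf f)) = gen R sf rf (Gen.edge f) := by
  simp only [gen, ← map_mul]
  exact RingQuot.mkRingHom_rel (Rel.edge_rng f)

lemma g_rg (f : Ed) :
    gen R sf rf (Gen.vertex (rf f)) * gen R sf rf (Gen.ghost f) = gen R sf rf (Gen.ghost f) := by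
  simp only [gen, ← map_mul]
  exact RingQuot.mkRingHom_rel (Rel.rng_ghost f)

lemma g_gs (f : Ed) :
    gen R sf rf (Gen.ghost f) * gen R sf rf (Gen.vertex (sf f)) = gen R sf rf (Gen.ghost f) := by
  simp only [gen, ← map_mul]
  exact RingQuot.mkRingHom_rel (Rel.ghost_src f)

lemma g_ge (f : Ed) :
    gen R sf rf (Gen.ghost f) * gen R sf rf (Gen.edge f) = gen R sf rf (Gen.vertex (rf f)) := by
  simp only [gen, ← map_mul]
  exact RingQuot.mkRingHom_rel (Rel.ghost_edge_eq f)

lemma g_ge_ne {f f' : Ed} (h : f ≠ f') :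
    gen R sf rf (Gen.ghost f) * gen R sf rf (Gen.edge f') = 0 := by
  simp only [gen, ← map_mul]
  rw [RingQuot.mkRingHom_rel (Rel.ghost_edge_ne h), map_zero]

lemma g_ve_ne {v : V} {f : Ed} (h : v ≠ sf f) :
    gen R sf rf (Gen.vertex v) * gen R sf rf (Gen.edge f) = 0 := by
  rw [← g_se, ← mul_assoc, g_vv_ne R sf rf h, zero_mul]

lemma g_gv_ne {v : V} {f : Ed} (h : v ≠ sf f) :
    gen R sf rf (Gen.ghost f) * gen R sf rf (Gen.vertex v) = 0 := by
  rw [← g_gs, mul_assoc, g_vv_ne R sf rf (Ne.symm h), mul_zero]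

lemma lmul_neg (x y : LeavittPathAlgebra R sf rf) : x * -y = -(x * y) := mul_neg x y

lemma lneg_mul (x y : LeavittPathAlgebra R sf rf) : -x * y = -(x * y) := neg_mul x y

/-! ### basic lemmas about path elements -/

lemma vertex_mul_real {u w : V} (p : GPath sf rf u w) :
    gen R sf rf (Gen.vertex u) * realElem R sf rf p = realElem R sf rf p := by
  induction p with
  | nil v => exact g_vv R sf rf v
  | cons f p ih => rw [realElem, ← mul_assoc, g_se]

lemma vertex_mul_real_ne {v u w : V} (h : v ≠ u) (p : GPath sf rf u w) :
    gen R sf rf (Gen.vertex v) * realElem R sf rf p = 0 := by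
  induction p with
  | nil u' => exact g_vv_ne R sf rf h
  | cons f p ih => rw [realElem, ← mul_assoc, g_ve_ne R sf rf h, zero_mul]

lemma real_mul_vertex {u w : V} (p : GPath sf rf u w) :
    realElem R sf rf p * gen R sf rf (Gen.vertex w) = realElem R sf rf p := by
  induction p with
  | nil v => exact g_vv R sf rf v
  | cons f p ih => rw [realElem, mul_assoc, ih]

lemma ghost_mul_vertex {u w : V} (p : GPath sf rf u w) :
    ghostElem R sf rf p * gen R sf rf (Gen.vertex u) = ghostElem R sf rf p := by
  induction p with
  | nil v => exact g_vv R sf rf v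
  | cons f p ih => rw [ghostElem, mul_assoc, g_gs]

lemma ghost_mul_vertex_ne {v u w : V} (h : v ≠ u) (p : GPath sf rf u w) :
    ghostElem R sf rf p * gen R sf rf (Gen.vertex v) = 0 := by
  induction p with
  | nil u' => exact g_vv_ne R sf rf (Ne.symm h)
  | cons f p ih => rw [ghostElem, mul_assoc, g_gv_ne R sf rf h, mul_zero]

lemma vertex_mul_ghost {u w : V} (p : GPath sf rf u w) :
    gen R sf rf (Gen.vertex w) * ghostElem R sf rf p = ghostElem R sf rf p := by
  induction p with
  | nil v => exact g_vv R sf rf v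
  | cons f p ih => rw [ghostElem, ← mul_assoc, ih]

lemma ghost_mul_real_self {u w : V} (p : GPath sf rf u w) :
    ghostElem R sf rf p * realElem R sf rf p = gen R sf rf (Gen.vertex w) := by
  induction p with
  | nil v => exact g_vv R sf rf v
  | cons f p ih =>
    rw [ghostElem, realElem, mul_assoc, ← mul_assoc (gen R sf rf (Gen.ghost f)), g_ge,
      vertex_mul_real, ih]

lemma degree_comp {G : Type*} [Group G] (dg : Ed → G) {u v w : V}
    (p : GPath sf rf u v) (q : GPath sf rf v w) :
    (p.comp q).degree dg = p.degree dg * q.degree dg := by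
  induction p with
  | nil v => rw [GPath.comp, GPath.degree, one_mul]
  | cons f p ih => rw [GPath.comp, GPath.degree, GPath.degree, ih, mul_assoc]

lemma realElem_comp {u v w : V} (p : GPath sf rf u v) (q : GPath sf rf v w) :
    realElem R sf rf (p.comp q) = realElem R sf rf p * realElem R sf rf q := by
  induction p with
  | nil v => rw [GPath.comp, realElem, vertex_mul_real]
  | cons f p ih => rw [GPath.comp, realElem, realElem, ih, mul_assoc]

lemma ghostElem_comp {u v w : V} (p : GPath sf rf u v) (q : GPath sf rf v w) :
    ghostElem R sf rf (p.comp q) = ghostElem R sf rf q * ghostElem R sf rf p := by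
  induction p with
  | nil v => rw [GPath.comp, ghostElem, ghost_mul_vertex]
  | cons f p ih => rw [GPath.comp, ghostElem, ghostElem, ih, mul_assoc]

/-! ### the key trichotomy for `β* · α` -/

lemma trichotomy {G : Type*} [Group G] (dg : Ed → G) {u₁ w : V} (β : GPath sf rf u₁ w) :
    ∀ {u₂ w₂ : V} (α : GPath sf rf u₂ w₂),
    (ghostElem R sf rf β * realElem R sf rf α = 0 ∧
      ghostElem R sf rf α * realElem R sf rf β = 0) ∨
    (∃ γ : GPath sf rf w w₂,
      ghostElem R sf rf β * realElem R sf rf α = realElem R sf rf γ ∧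
      ghostElem R sf rf α * realElem R sf rf β = ghostElem R sf rf γ ∧
      realElem R sf rf α = realElem R sf rf β * realElem R sf rf γ ∧
      ghostElem R sf rf α = ghostElem R sf rf γ * ghostElem R sf rf β ∧
      GPath.degree dg β * GPath.degree dg γ = GPath.degree dg α) ∨
    (∃ δ : GPath sf rf w₂ w,
      ghostElem R sf rf β * realElem R sf rf α = ghostElem R sf rf δ ∧
      ghostElem R sf rf α * realElem R sf rf β = realElem R sf rf δ ∧
      realElem R sf rf β = realElem R sf rf α * realElem R sf rf δ ∧
      ghostElem R sf rf β = ghostElem R sf rf δ * ghostElem R sf rf α ∧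
      GPath.degree dg α * GPath.degree dg δ = GPath.degree dg β) := by
  induction β with
  | nil v =>
    intro u₂ w₂ α
    by_cases h : v = u₂
    · subst h
      refine Or.inr (Or.inl ⟨α, ?_, ?_, ?_, ?_, ?_⟩)
      · exact vertex_mul_real R sf rf α
      · exact ghost_mul_vertex R sf rf α
      · exact (vertex_mul_real R sf rf α).symm
      · exact (ghost_mul_vertex R sf rf α).symm
      · rw [GPath.degree, one_mul]
    · exact Or.inl ⟨vertex_mul_real_ne R sf rf h α, ghost_mul_vertex_ne R sf rf h α⟩
  | cons f p ih =>
    intro u₂ w₂ α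
    cases α with
    | nil _ =>
      by_cases h : u₂ = sf f
      · subst h
        refine Or.inr (Or.inr ⟨GPath.cons f p, ?_, ?_, ?_, ?_, ?_⟩)
        · exact ghost_mul_vertex R sf rf _
        · exact vertex_mul_real R sf rf _
        · exact (vertex_mul_real R sf rf _).symm
        · exact (ghost_mul_vertex R sf rf _).symm
        · simp only [GPath.degree, one_mul]
      · exact Or.inl ⟨ghost_mul_vertex_ne R sf rf h _, vertex_mul_real_ne R sf rf h _⟩
    | cons f' p' =>
      by_cases hf : f = f'
      · subst hf
        have key : ∀ {wa wb : V} (q : GPath sf rf (rf f) wa) (q' : GPath sf rf (rf f) wb),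
            ghostElem R sf rf (GPath.cons f q) * realElem R sf rf (GPath.cons f q') =
              ghostElem R sf rf q * realElem R sf rf q' := by
          intro wa wb q q'
          rw [ghostElem, realElem, mul_assoc, ← mul_assoc (gen R sf rf (Gen.ghost f)), g_ge,
            vertex_mul_real]
        rcases ih p' with ⟨h1, h2⟩ | ⟨γ, e1, e2, e3, e4, e5⟩ | ⟨δ, e1, e2, e3, e4, e5⟩
        · exact Or.inl ⟨(key p p').trans h1, (key p' p).trans h2⟩
        · refine Or.inr (Or.inl ⟨γ, (key p p').trans e1, (key p' p).trans e2, ?_, ?_, ?_⟩)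
          · show gen R sf rf (Gen.edge f) * realElem R sf rf p' = _
            rw [e3, realElem, mul_assoc]
          · show ghostElem R sf rf p' * gen R sf rf (Gen.ghost f) = _
            rw [e4, ghostElem, mul_assoc]
          · show (dg f * GPath.degree dg p) * GPath.degree dg γ = dg f * GPath.degree dg p'
            rw [mul_assoc, e5]
        · refine Or.inr (Or.inr ⟨δ, (key p p').trans e1, (key p' p).trans e2, ?_, ?_, ?_⟩)
          · show gen R sf rf (Gen.edge f) * realElem R sf rf p = _
            rw [e3, realElem, mul_assoc]
          · show ghostElem R sf rf p * gen R sf rf (Gen.ghost f) = _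
            rw [e4, ghostElem, mul_assoc]
          · show (dg f * GPath.degree dg p') * GPath.degree dg δ = dg f * GPath.degree dg p
            rw [mul_assoc, e5]
      · refine Or.inl ⟨?_, ?_⟩
        · rw [ghostElem, realElem, mul_assoc, ← mul_assoc (gen R sf rf (Gen.ghost f)),
            g_ge_ne R sf rf hf, zero_mul, mul_zero]
        · rw [ghostElem, realElem, mul_assoc, ← mul_assoc (gen R sf rf (Gen.ghost f')),
            g_ge_ne R sf rf (Ne.symm hf), zero_mul, mul_zero]

/-! ### coefficients -/

lemma ofR_one : ofR R sf rf 1 = 1 := by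
  rw [ofR, ← MonoidAlgebra.one_def, map_one]

lemma ofR_mul_ofR (r r' : R) : ofR R sf rf r * ofR R sf rf r' = ofR R sf rf (r * r') := by
  simp only [ofR, ← map_mul]
  congr 1
  rw [MonoidAlgebra.single_mul_single, one_mul]

lemma gen_mul_ofR (x : Gen V Ed) (r : R) :
    gen R sf rf x * ofR R sf rf r = ofR R sf rf r * gen R sf rf x := by
  simp only [gen, ofR, ← map_mul]
  congr 1
  simp [genF, MonoidAlgebra.of_apply, MonoidAlgebra.single_mul_single]

lemma real_mul_ofR {u w : V} (p : GPath sf rf u w) (r : R) :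
    realElem R sf rf p * ofR R sf rf r = ofR R sf rf r * realElem R sf rf p := by
  induction p with
  | nil v => exact gen_mul_ofR R sf rf _ r
  | cons f p ih =>
    rw [realElem, mul_assoc, ih, ← mul_assoc, gen_mul_ofR, mul_assoc]

lemma ghost_mul_ofR {u w : V} (p : GPath sf rf u w) (r : R) :
    ghostElem R sf rf p * ofR R sf rf r = ofR R sf rf r * ghostElem R sf rf p := by
  induction p with
  | nil v => exact gen_mul_ofR R sf rf _ r
  | cons f p ih =>
    rw [ghostElem, mul_assoc, gen_mul_ofR, ← mul_assoc, ih, mul_assoc]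

lemma mono_mul_ofR {u u' w : V} (α : GPath sf rf u w) (β : GPath sf rf u' w) (r : R) :
    (realElem R sf rf α * ghostElem R sf rf β) * ofR R sf rf r =
      ofR R sf rf r * (realElem R sf rf α * ghostElem R sf rf β) := by
  rw [mul_assoc, ghost_mul_ofR, ← mul_assoc, real_mul_ofR, mul_assoc]

/-- `(α β*)(β γ*) = α γ*` for paths with common range `w`. -/
lemma mono_mul_mono {u u' u'' w : V} (α : GPath sf rf u w) (β : GPath sf rf u' w)
    (γ : GPath sf rf u'' w) :
    (realElem R sf rf α * ghostElem R sf rf β) * (realElem R sf rf β * ghostElem R sf rf γ) =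
      realElem R sf rf α * ghostElem R sf rf γ := by
  rw [mul_assoc, ← mul_assoc (ghostElem R sf rf β), ghost_mul_real_self, vertex_mul_ghost]

/-! ### membership lemmas for components -/

variable {G : Type*} [Group G] (dg : Ed → G)

lemma mem_component {g : G} (r : R) {u u' w : V} (α : GPath sf rf u w) (β : GPath sf rf u' w)
    (h : α.degree dg * (β.degree dg)⁻¹ = g) :
    ofR R sf rf r * (realElem R sf rf α * ghostElem R sf rf β) ∈ component R sf rf dg g :=
  AddSubgroup.subset_closure ⟨r, u, u', w, α, β, h, rfl⟩

lemma mem_component' {g : G} {u u' w : V} (α : GPath sf rf u w) (β : GPath sf rf u' w)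
    (h : α.degree dg * (β.degree dg)⁻¹ = g) :
    realElem R sf rf α * ghostElem R sf rf β ∈ component R sf rf dg g := by
  have := mem_component R sf rf dg (g := g) 1 α β h
  rwa [ofR_one, one_mul] at this

lemma mul_mem_comp {g h : G} :
    ∀ x ∈ component R sf rf dg g, ∀ y ∈ component R sf rf dg h,
      x * y ∈ component R sf rf dg (g * h) := by
  intro x hx
  induction hx using AddSubgroup.closure_induction with
  | mem x hxm =>
    intro y hy
    induction hy using AddSubgroup.closure_induction with
    | mem y hym =>
      obtain ⟨r, u, u', w, α, β, hdeg, rfl⟩ := hxm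
      obtain ⟨r', u₂, u₂', w₂, α', β', hdeg', rfl⟩ := hym
      have key : (ofR R sf rf r * (realElem R sf rf α * ghostElem R sf rf β)) *
          (ofR R sf rf r' * (realElem R sf rf α' * ghostElem R sf rf β')) =
          ofR R sf rf (r * r') * (realElem R sf rf α *
            ((ghostElem R sf rf β * realElem R sf rf α') * ghostElem R sf rf β')) := by
        rw [mul_assoc (ofR R sf rf r), ← mul_assoc (realElem R sf rf α * ghostElem R sf rf β),
          mono_mul_ofR, mul_assoc (ofR R sf rf r'), ← mul_assoc (ofR R sf rf r), ofR_mul_ofR]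
        congr 1
        rw [mul_assoc (realElem R sf rf α), ← mul_assoc (ghostElem R sf rf β)]
      rw [key]
      rcases trichotomy R sf rf dg β α' with ⟨h1, _⟩ | ⟨γ, e1, _, _, _, e5⟩ |
          ⟨δ, e1, _, _, _, e5⟩
      · rw [h1, zero_mul, mul_zero, mul_zero]
        exact zero_mem _
      · rw [e1, ← mul_assoc (realElem R sf rf α) (realElem R sf rf γ), ← realElem_comp]
        refine mem_component R sf rf dg _ _ _ ?_
        rw [degree_comp, ← hdeg, ← hdeg', ← e5]
        group
      · rw [e1, ← ghostElem_comp]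
        refine mem_component R sf rf dg _ _ _ ?_
        rw [degree_comp, ← hdeg, ← hdeg', ← e5]
        group
    | zero =>
      rw [mul_zero]; exact zero_mem _
    | add y z _ _ ihy ihz =>
      rw [mul_add]; exact add_mem ihy ihz
    | neg y _ ihy =>
      rw [lmul_neg R sf rf]; exact neg_mem ihy
  | zero =>
    intro y _; rw [zero_mul]; exact zero_mem _
  | add x z _ _ ihx ihz =>
    intro y hy; rw [add_mul]; exact add_mem (ihx y hy) (ihz y hy)
  | neg x _ ihx =>
    intro y hy; rw [lneg_mul R sf rf]; exact neg_mem (ihx y hy)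

/-! ### `sgMul` lemmas -/

lemma sgMul_le {A : Type*} [NonUnitalRing A] {B C D : AddSubgroup A}
    (h : ∀ b ∈ B, ∀ c ∈ C, b * c ∈ D) : sgMul B C ≤ D := by
  rw [sgMul, AddSubgroup.closure_le]
  rintro x ⟨b, hb, c, hc, rfl⟩
  exact h b hb c hc

lemma mem_sgMul {A : Type*} [NonUnitalRing A] {B C : AddSubgroup A} {b c : A}
    (hb : b ∈ B) (hc : c ∈ C) : b * c ∈ sgMul B C :=
  AddSubgroup.subset_closure ⟨b, hb, c, hc, rfl⟩

lemma comp_mul_comp_le {g h : G} :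
    sgMul (component R sf rf dg g) (component R sf rf dg h) ≤ component R sf rf dg (g * h) :=
  sgMul_le (mul_mem_comp R sf rf dg)

lemma sgMul_mul_comp_one {g h : G} {a d : LeavittPathAlgebra R sf rf}
    (ha : a ∈ sgMul (component R sf rf dg g) (component R sf rf dg h))
    (hd : d ∈ component R sf rf dg 1) :
    a * d ∈ sgMul (component R sf rf dg g) (component R sf rf dg h) := by
  induction ha using AddSubgroup.closure_induction with
  | mem x hxm =>
    obtain ⟨b, hb, c, hc, rfl⟩ := hxm
    rw [mul_assoc]
    refine mem_sgMul hb ?_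
    have := mul_mem_comp R sf rf dg c hc d hd
    rwa [mul_one] at this
  | zero => rw [zero_mul]; exact zero_mem _
  | add x y _ _ ihx ihy => rw [add_mul]; exact add_mem ihx ihy
  | neg x _ ihx => rw [lneg_mul R sf rf]; exact neg_mem ihx

/-! ### the commuting idempotent span -/

/-- The additive span of the elements `α α*`. -/
noncomputable def espan : AddSubgroup (LeavittPathAlgebra R sf rf) :=
  AddSubgroup.closure
    {e | ∃ (u w : V) (α : GPath sf rf u w), e = realElem R sf rf α * ghostElem R sf rf α}

lemma espan_mul_mem : ∀ a ∈ espan R sf rf, ∀ b ∈ espan R sf rf, a * b ∈ espan R sf rf := by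
  intro a ha
  induction ha using AddSubgroup.closure_induction with
  | mem x hxm =>
    intro b hb
    induction hb using AddSubgroup.closure_induction with
    | mem y hym =>
      obtain ⟨u, w, α, rfl⟩ := hxm
      obtain ⟨u', w', γ, rfl⟩ := hym
      have key : (realElem R sf rf α * ghostElem R sf rf α) *
          (realElem R sf rf γ * ghostElem R sf rf γ) =
          realElem R sf rf α * ((ghostElem R sf rf α * realElem R sf rf γ) *
            ghostElem R sf rf γ) := by
        rw [mul_assoc (realElem R sf rf α), ← mul_assoc (ghostElem R sf rf α)]
      rw [key]
      rcases trichotomy R sf rf (fun _ : Ed => (1 : Multiplicative ℤ)) α γ with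
        ⟨h1, _⟩ | ⟨γ₀, e1, _, e3, _, _⟩ | ⟨δ, e1, _, _, e4, _⟩
      · rw [h1, zero_mul, mul_zero]; exact zero_mem _
      · rw [e1, ← mul_assoc, ← e3]
        exact AddSubgroup.subset_closure ⟨_, _, γ, rfl⟩
      · rw [e1, ← e4]
        exact AddSubgroup.subset_closure ⟨_, _, α, rfl⟩
    | zero => rw [mul_zero]; exact zero_mem _
    | add y z _ _ ihy ihz => rw [mul_add]; exact add_mem ihy ihz
    | neg y _ ihy => rw [lmul_neg R sf rf]; exact neg_mem ihy
  | zero => intro b _; rw [zero_mul]; exact zero_mem _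
  | add x y _ _ ihx ihy => intro b hb; rw [add_mul]; exact add_mem (ihx b hb) (ihy b hb)
  | neg x _ ihx => intro b hb; rw [lneg_mul R sf rf]; exact neg_mem (ihx b hb)

lemma espan_comm : ∀ a ∈ espan R sf rf, ∀ b ∈ espan R sf rf, a * b = b * a := by
  intro a ha
  induction ha using AddSubgroup.closure_induction with
  | mem x hxm =>
    intro b hb
    induction hb using AddSubgroup.closure_induction with
    | mem y hym =>
      obtain ⟨u, w, α, rfl⟩ := hxm
      obtain ⟨u', w', γ, rfl⟩ := hym
      have key : ∀ {v v' t t' : V} (ρ : GPath sf rf v t) (σ : GPath sf rf v' t'),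
          (realElem R sf rf ρ * ghostElem R sf rf ρ) *
            (realElem R sf rf σ * ghostElem R sf rf σ) =
            realElem R sf rf ρ * ((ghostElem R sf rf ρ * realElem R sf rf σ) *
              ghostElem R sf rf σ) := by
        intro v v' t t' ρ σ
        rw [mul_assoc (realElem R sf rf ρ), ← mul_assoc (ghostElem R sf rf ρ)]
      rw [key α γ, key γ α]
      rcases trichotomy R sf rf (fun _ : Ed => (1 : Multiplicative ℤ)) α γ with
        ⟨h1, h2⟩ | ⟨γ₀, e1, e2, e3, e4, _⟩ | ⟨δ, e1, e2, e3, e4, _⟩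
      · rw [h1, h2, zero_mul, mul_zero, zero_mul, mul_zero]
      · rw [e1, e2, e4, e3, ← mul_assoc]
      · rw [e1, e2, ← e4, e3, mul_assoc]
    | zero => rw [mul_zero, zero_mul]
    | add y z _ _ ihy ihz => rw [mul_add, add_mul, ihy, ihz]
    | neg y _ ihy => rw [lmul_neg R sf rf, lneg_mul R sf rf, ihy]
  | zero => intro b _; rw [zero_mul, mul_zero]
  | add x y _ _ ihx ihy => intro b hb; rw [add_mul, mul_add, ihx b hb, ihy b hb]
  | neg x _ ihx => intro b hb; rw [lneg_mul R sf rf, lmul_neg R sf rf, ihx b hb]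

/-! ### local units -/

lemma left_unit {g : G} :
    ∀ x ∈ component R sf rf dg g,
      ∃ ε, ε ∈ sgMul (component R sf rf dg g) (component R sf rf dg g⁻¹) ∧
        ε ∈ espan R sf rf ∧ ε * x = x := by
  intro x hx
  induction hx using AddSubgroup.closure_induction with
  | mem x hxm =>
    obtain ⟨r, u, u', w, α, β, hdeg, rfl⟩ := hxm
    refine ⟨(realElem R sf rf α * ghostElem R sf rf β) *
      (realElem R sf rf β * ghostElem R sf rf α), ?_, ?_, ?_⟩
    · refine mem_sgMul (mem_component' R sf rf dg α β hdeg) ?_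
      refine mem_component' R sf rf dg β α ?_
      rw [← hdeg]; group
    · rw [mono_mul_mono]
      exact AddSubgroup.subset_closure ⟨_, _, α, rfl⟩
    · rw [mono_mul_mono, ← mul_assoc, mono_mul_ofR, mul_assoc, mono_mul_mono]
  | zero => exact ⟨0, zero_mem _, zero_mem _, by rw [zero_mul]⟩
  | add x y hxc hyc ihx ihy =>
    obtain ⟨ε₁, m1, n1, h1⟩ := ihx
    obtain ⟨ε₂, m2, n2, h2⟩ := ihy
    refine ⟨ε₁ + ε₂ - ε₁ * ε₂, ?_, ?_, ?_⟩
    · refine sub_mem (add_mem m1 m2) (sgMul_mul_comp_one R sf rf dg m1 ?_)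
      have := comp_mul_comp_le R sf rf dg m2
      rwa [mul_inv_cancel] at this
    · exact sub_mem (add_mem n1 n2) (espan_mul_mem R sf rf ε₁ n1 ε₂ n2)
    · have c : ε₁ * ε₂ = ε₂ * ε₁ := espan_comm R sf rf ε₁ n1 ε₂ n2
      have h3 : ε₁ * ε₂ * x = ε₂ * x := by rw [c, mul_assoc, h1]
      have h4 : ε₁ * ε₂ * y = ε₁ * y := by rw [mul_assoc, h2]
      rw [sub_mul, add_mul, mul_add, mul_add, mul_add, h1, h2, h3, h4]
      abel
  | neg x _ ihx =>
    obtain ⟨ε, m, n, h⟩ := ihx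
    exact ⟨ε, m, n, by rw [lmul_neg R sf rf, h]⟩

lemma right_unit {g : G} :
    ∀ x ∈ component R sf rf dg g,
      ∃ ε, ε ∈ sgMul (component R sf rf dg g⁻¹) (component R sf rf dg g) ∧
        ε ∈ espan R sf rf ∧ x * ε = x := by
  intro x hx
  induction hx using AddSubgroup.closure_induction with
  | mem x hxm =>
    obtain ⟨r, u, u', w, α, β, hdeg, rfl⟩ := hxm
    refine ⟨(realElem R sf rf β * ghostElem R sf rf α) *
      (realElem R sf rf α * ghostElem R sf rf β), ?_, ?_, ?_⟩
    · refine mem_sgMul (mem_component' R sf rf dg β α ?_) (mem_component' R sf rf dg α β hdeg)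
      rw [← hdeg]; group
    · rw [mono_mul_mono]
      exact AddSubgroup.subset_closure ⟨_, _, β, rfl⟩
    · rw [mono_mul_mono, mul_assoc, mono_mul_mono]
  | zero => exact ⟨0, zero_mem _, zero_mem _, by rw [zero_mul]⟩
  | add x y hxc hyc ihx ihy =>
    obtain ⟨ε₁, m1, n1, h1⟩ := ihx
    obtain ⟨ε₂, m2, n2, h2⟩ := ihy
    refine ⟨ε₁ + ε₂ - ε₁ * ε₂, ?_, ?_, ?_⟩
    · refine sub_mem (add_mem m1 m2) (sgMul_mul_comp_one R sf rf dg m1 ?_)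
      have := comp_mul_comp_le R sf rf dg m2
      rwa [inv_mul_cancel] at this
    · exact sub_mem (add_mem n1 n2) (espan_mul_mem R sf rf ε₁ n1 ε₂ n2)
    · have c : ε₂ * ε₁ = ε₁ * ε₂ := espan_comm R sf rf ε₂ n2 ε₁ n1
      have h3 : x * (ε₁ * ε₂) = x * ε₂ := by rw [← mul_assoc, h1]
      have h4 : y * (ε₁ * ε₂) = y * ε₁ := by rw [← c, ← mul_assoc, h2]
      rw [add_mul, mul_sub, mul_sub, mul_add, mul_add, h1, h2, h3, h4]
      abel
  | neg x _ ihx =>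
    obtain ⟨ε, m, n, h⟩ := ihx
    exact ⟨ε, m, n, by rw [lneg_mul R sf rf, h]⟩

end Aux

end LPA

open LPA in
/-- If `E` is a directed graph, `R` an associative unital ring and `G` a
group, then `L_R(E)`, with any standard `G`-gradation, is symmetrically `G`-graded
(`S_g S_{g⁻¹} S_g = S_g` for all `g ∈ G`) and strongly right and strongly left
non-degenerately `G`-graded: for every `g ∈ G` and nonzero `x ∈ S_g` one has
`(S_g S_{g⁻¹}) x ≠ {0}` and `x (S_{g⁻¹} S_g) ≠ {0}`. -/
theorem leavitt_symmetrically_and_nondegenerate (R : Type*) [Ring R] {V Ed : Type*}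
    (sf rf : Ed → V) {G : Type*} [Group G] (dg : Ed → G) :
    (∀ g : G, sgMul (sgMul (component R sf rf dg g) (component R sf rf dg g⁻¹))
        (component R sf rf dg g) = component R sf rf dg g) ∧
    ∀ g : G, ∀ x ∈ component R sf rf dg g, x ≠ 0 →
      (∃ t ∈ sgMul (component R sf rf dg g) (component R sf rf dg g⁻¹), t * x ≠ 0) ∧
      (∃ t ∈ sgMul (component R sf rf dg g⁻¹) (component R sf rf dg g), x * t ≠ 0) := by
  constructor
  · intro g
    apply le_antisymm
    · refine sgMul_le ?_
      intro a ha b hb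
      have ha1 : a ∈ component R sf rf dg (g * g⁻¹) := comp_mul_comp_le R sf rf dg ha
      have := mul_mem_comp R sf rf dg a ha1 b hb
      rwa [mul_inv_cancel, one_mul] at this
    · rw [component, AddSubgroup.closure_le]
      rintro x ⟨r, u, u', w, α, β, hdeg, rfl⟩
      have hb2 : realElem R sf rf β * ghostElem R sf rf α ∈ component R sf rf dg g⁻¹ := by
        refine mem_component' R sf rf dg β α ?_
        rw [← hdeg]; group
      have key : ((realElem R sf rf α * ghostElem R sf rf β) *
          (realElem R sf rf β * ghostElem R sf rf α)) *
          (ofR R sf rf r * (realElem R sf rf α * ghostElem R sf rf β)) =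
          ofR R sf rf r * (realElem R sf rf α * ghostElem R sf rf β) := by
        rw [mono_mul_mono, ← mul_assoc, mono_mul_ofR, mul_assoc, mono_mul_mono]
      have hmem : ofR R sf rf r * (realElem R sf rf α * ghostElem R sf rf β) ∈
          component R sf rf dg g := mem_component R sf rf dg r α β hdeg
      rw [← key]
      exact mem_sgMul (mem_sgMul (mem_component' R sf rf dg α β hdeg) hb2) hmem
  · intro g x hx hne
    obtain ⟨ε, hm, _, he⟩ := left_unit R sf rf dg x hx
    obtain ⟨ε', hm', _, he'⟩ := right_unit R sf rf dg x hx
    exact ⟨⟨ε, hm, by rw [he]; exact hne⟩, ⟨ε', hm', by rw [he']; exact hne⟩⟩
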